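/- Let T be a 1-optimal out-branching of a digraph D. Then the pair (X, T), where for each v ∈ V(T) the bag is X_v = {u, v} ∪ BrSucc(T) ∪ Leaf(T) ∪ Head(Back_D^T(v)) with u the in-neighbor of v in T (and u omitted when v is the root), is a tree decomposition of D (with the underlying undirected tree of T as its tree). -/

import Mathlib

/-- A (finite, loopless) directed graph, given by its vertex set and arc set. -/
structure DirGraph (V : Type) where
  verts : Set V
  arcs : Set (V × V)

namespace DirGraph

variable {V : Type}

/-- Every arc joins two distinct vertices of the digraph. -/
def WellFormed (D : DirGraph V) : Prop :=
  ∀ a ∈ D.arcs, a.1 ∈ D.verts ∧ a.2 ∈ D.verts ∧ a.1 ≠ a.2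

/-- `T` is a subgraph of `D`. -/
def IsSubgraph (T D : DirGraph V) : Prop :=
  T.verts ⊆ D.verts ∧ T.arcs ⊆ D.arcs

/-- The in-degree of a vertex. -/
noncomputable def inDeg (D : DirGraph V) (v : V) : ℕ :=
  {a ∈ D.arcs | a.2 = v}.ncard

/-- The out-degree of a vertex. -/
noncomputable def outDeg (D : DirGraph V) (v : V) : ℕ :=
  {a ∈ D.arcs | a.1 = v}.ncard

/-- A dipath in `D`: a nonempty list of distinct vertices of `D`,
consecutive ones being joined by arcs of `D`. -/
def IsDipath (D : DirGraph V) (l : List V) : Prop :=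
  l ≠ [] ∧ l.Nodup ∧ (∀ v ∈ l, v ∈ D.verts) ∧
    l.Chain' (fun u v => (u, v) ∈ D.arcs)

/-- `v` is reachable from `u` by a dipath of `D` (in particular,
every vertex of `D` reaches itself). -/
def Reaches (D : DirGraph V) (u v : V) : Prop :=
  ∃ l : List V, D.IsDipath l ∧ l.head? = some u ∧ l.getLast? = some v

/-- `R_D(u)`: the set of vertices reachable from `u` in `D`. -/
def reachSet (D : DirGraph V) (u : V) : Set V := {v | D.Reaches u v}

/-- `T` is an out-tree with root `r`: `r` is the only vertex of in-degree 0,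
every other vertex has in-degree 1, and the underlying graph is a tree
(equivalently, under the degree conditions, every vertex is reachable from `r`). -/
structure IsOutTree (T : DirGraph V) (r : V) : Prop where
  arcs_mem : ∀ a ∈ T.arcs, a.1 ∈ T.verts ∧ a.2 ∈ T.verts
  root_mem : r ∈ T.verts
  root_indeg : T.inDeg r = 0
  indeg_one : ∀ v ∈ T.verts, v ≠ r → T.inDeg v = 1
  reach_root : ∀ v ∈ T.verts, T.Reaches r v

/-- `T` is an out-tree of the digraph `D`, with root `r`. -/
def IsOutTreeOf (T D : DirGraph V) (r : V) : Prop :=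
  T.IsOutTree r ∧ T.IsSubgraph D

/-- `T` is an out-branching (spanning out-tree) of `D`, with root `r`. -/
def IsOutBranching (T D : DirGraph V) (r : V) : Prop :=
  T.IsOutTreeOf D r ∧ T.verts = D.verts

/-- `Leaf(T)`: the vertices of out-degree 0. -/
def leaves (T : DirGraph V) : Set V := {v ∈ T.verts | T.outDeg v = 0}

/-- `Branch(T)`: the vertices of out-degree at least 2. -/
def branchVerts (T : DirGraph V) : Set V := {v ∈ T.verts | 2 ≤ T.outDeg v}

/-- `BrSucc(T)`: the vertices whose in-neighbor in `T` is a branch vertex. -/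
def brSucc (T : DirGraph V) : Set V := {v | ∃ u, (u, v) ∈ T.arcs ∧ 2 ≤ T.outDeg u}

/-- `Head(B)`: the set of heads of the arcs in `B`. -/
def heads (B : Set (V × V)) : Set V := Prod.snd '' B

/-- `Back_D^T(z) = {(u,v) ∈ A(D) : v ≺_T z ⪯_T u}`. -/
def backArcs (D T : DirGraph V) (z : V) : Set (V × V) :=
  {a ∈ D.arcs | (T.Reaches a.2 z ∧ a.2 ≠ z) ∧ T.Reaches z a.1}

/-- The 1-change for `(u,v)`: add the arc `(u,v)` and delete the arc of `T`
with head `v`. -/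
def oneChange (T : DirGraph V) (u v : V) : DirGraph V :=
  ⟨T.verts, {a ∈ T.arcs | a.2 ≠ v} ∪ {(u, v)}⟩

/-- `ℓ(D)`: the maximum number of leaves over all out-trees of `D`. -/
noncomputable def ell (D : DirGraph V) : ℕ :=
  sSup {k | ∃ (T : DirGraph V) (r : V), IsOutTreeOf T D r ∧ (leaves T).ncard = k}

/-- `ℓ_s(D)`: the maximum number of leaves over all out-branchings of `D`. -/
noncomputable def ellS (D : DirGraph V) : ℕ :=
  sSup {k | ∃ (T : DirGraph V) (r : V), IsOutBranching T D r ∧ (leaves T).ncard = k}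

/-- An arc is useless if no out-branching of `D` contains it. -/
def Useless (D : DirGraph V) (a : V × V) : Prop :=
  ∀ (T : DirGraph V) (r : V), IsOutBranching T D r → a ∉ T.arcs

/-- `T` is a 1-optimal out-branching of `D`: no 1-change for an arc of
`A(D) \ A(T)` results in an out-branching with more leaves. -/
def IsOneOptimal (T D : DirGraph V) (r : V) : Prop :=
  IsOutBranching T D r ∧
    ∀ u v : V, (u, v) ∈ D.arcs → (u, v) ∉ T.arcs → v ≠ r →
      ∀ r' : V, IsOutBranching (oneChange T u v) D r' →
        (leaves (oneChange T u v)).ncard ≤ (leaves T).ncard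

/-- `(X, U)` is a tree decomposition of the digraph `D`: `U` is a tree,
every vertex of `D` is in some bag, both endpoints of every arc are in a
common bag, and for every vertex the set of nodes whose bags contain it
induces a subtree (a connected subgraph) of `U`. -/
structure IsTreeDecomp {ι : Type} (D : DirGraph V) (U : SimpleGraph ι) (X : ι → Set V) :
    Prop where
  tree : U.IsTree
  mem_bag : ∀ v ∈ D.verts, ∃ i, v ∈ X i
  arc_bag : ∀ a ∈ D.arcs, ∃ i, a.1 ∈ X i ∧ a.2 ∈ X i
  bag_connected : ∀ (v : V) (i j : ι), v ∈ X i → v ∈ X j →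
    Relation.ReflTransGen (fun x y => U.Adj x y ∧ v ∈ X x ∧ v ∈ X y) i j

/-- The underlying undirected graph of `T`, on the vertex set of `T`. -/
def underlying (T : DirGraph V) : SimpleGraph {v // v ∈ T.verts} :=
  SimpleGraph.fromRel fun a b => ((a : V), (b : V)) ∈ T.arcs

/-- The bag `X_v = {u, v} ∪ BrSucc(T) ∪ Leaf(T) ∪ Head(Back_D^T(v))`,
where `u` is the in-neighbor of `v` in `T` (omitted when `v` is the root). -/
def bag (D T : DirGraph V) (v : V) : Set V :=
  {u | (u, v) ∈ T.arcs} ∪ {v} ∪ brSucc T ∪ leaves T ∪ heads (backArcs D T v)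

/-- The set of arcs of a dipath given as a list of vertices. -/
def listArcs (l : List V) : Set (V × V) := {a | a ∈ l.zip l.tail}

end DirGraph

namespace DirGraph

section Infra
set_option linter.unusedSectionVars false

variable [Fintype V]

/- ### helper list lemmas -/

lemma chain'_mem_tail {α : Type*} {R : α → α → Prop} :
    ∀ {l : List α}, l.Chain' R → ∀ y ∈ l.tail, ∃ x ∈ l, R x y := by
  intro l
  induction l with
  | nil => simp
  | cons a l ih =>
    intro h y hy
    simp only [List.tail_cons] at hy
    cases l with
    | nil => simp at hy
    | cons b l' =>
      simp only [List.Chain'] at h ⊢; rw [List.isChain_cons_cons] at h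
      rcases List.mem_cons.1 hy with rfl | hy'
      · exact ⟨a, List.mem_cons_self, h.1⟩
      · obtain ⟨x, hx, hR⟩ := ih h.2 y hy'
        exact ⟨x, List.mem_cons_of_mem _ hx, hR⟩

lemma crossing {α : Type*} {R : α → α → Prop} (S : Set α) :
    ∀ {l : List α}, l.Chain' R → ∀ x₀, l.head? = some x₀ → x₀ ∉ S →
      ∀ x ∈ l, x ∈ S → ∃ a b, R a b ∧ a ∉ S ∧ b ∈ S := by
  intro l
  induction l with
  | nil => simp
  | cons a l ih =>
    intro h x₀ hx₀ hx₀S x hx hxS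
    obtain rfl : a = x₀ := by simpa using hx₀
    rcases List.mem_cons.1 hx with rfl | hx'
    · exact absurd hxS hx₀S
    cases l with
    | nil => simp at hx'
    | cons b l' =>
      simp only [List.Chain'] at h ⊢; rw [List.isChain_cons_cons] at h
      by_cases hbS : b ∈ S
      · exact ⟨a, b, h.1, hx₀S, hbS⟩
      · exact ih h.2 b rfl hbS x hx' hxS

lemma nodup_head_ne_of_rev {α : Type*} {l : List α} {x y : α} {xs ys : List α}
    (hnd : l.Nodup) (h2 : 2 ≤ l.length) (h1 : l = x :: xs) (hrev : l.reverse = y :: ys) :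
    x ≠ y := by
  rintro rfl
  have hl : l = ys.reverse ++ [x] := by
    have := congrArg List.reverse hrev
    simpa using this
  rcases hys : ys.reverse with _ | ⟨a, t⟩
  · rw [hys] at hl; simp [hl] at h2
  · rw [hys, h1] at hl
    simp only [List.cons_append, List.cons.injEq] at hl
    obtain ⟨rfl, hxs⟩ := hl
    rw [h1, hxs] at hnd
    have : x ∉ t ++ [x] := (List.nodup_cons.1 hnd).1
    simp at this

/- ### dipath basics -/

variable {D T : DirGraph V} {r u v : V}

lemma dipath_singleton (hv : v ∈ D.verts) : D.IsDipath [v] := by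
  refine ⟨by simp, by simp, by simpa using hv, List.isChain_singleton _⟩

lemma reaches_refl (hv : v ∈ D.verts) : D.Reaches v v :=
  ⟨[v], dipath_singleton hv, rfl, rfl⟩

lemma reaches_left_mem (h : D.Reaches u v) : u ∈ D.verts := by
  obtain ⟨l, hl, hh, -⟩ := h
  exact hl.2.2.1 u (List.mem_of_mem_head? hh)

lemma reaches_right_mem (h : D.Reaches u v) : v ∈ D.verts := by
  obtain ⟨l, hl, -, hg⟩ := h
  exact hl.2.2.1 v (List.mem_of_mem_getLast? hg)

lemma dipath_suffix {l l' : List V} (h : D.IsDipath l) (hs : l' <:+ l) (hne : l' ≠ []) :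
    D.IsDipath l' :=
  ⟨hne, h.2.1.sublist hs.sublist, fun x hx => h.2.2.1 x (hs.sublist.mem hx),
    h.2.2.2.suffix hs⟩

lemma dipath_prefix {l l' : List V} (h : D.IsDipath l) (hs : l' <+: l) (hne : l' ≠ []) :
    D.IsDipath l' :=
  ⟨hne, h.2.1.sublist hs.sublist, fun x hx => h.2.2.1 x (hs.sublist.mem hx),
    h.2.2.2.prefix hs⟩

/-- From a vertex on a dipath, the rest of the dipath is a dipath. -/
lemma reaches_getLast_of_mem {l : List V} (h : D.IsDipath l) (hy : v ∈ l) {z : V}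
    (hz : l.getLast? = some z) : D.Reaches v z := by
  obtain ⟨l₁, l₂, rfl⟩ := List.append_of_mem hy
  refine ⟨v :: l₂, dipath_suffix h ⟨l₁, rfl⟩ (by simp), rfl, ?_⟩
  rwa [List.getLast?_append_of_ne_nil] at hz
  simp

lemma reaches_of_head_mem {l : List V} (h : D.IsDipath l) {z : V}
    (hz : l.head? = some z) (hy : v ∈ l) : D.Reaches z v := by
  obtain ⟨l₁, l₂, rfl⟩ := List.append_of_mem hy
  refine ⟨l₁ ++ [v], dipath_prefix h ⟨l₂, by simp⟩ (by simp), ?_, ?_⟩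
  · rcases l₁ with _ | ⟨a, t⟩
    · simpa using hz
    · simpa using hz
  · simp


/- ### out-tree lemmas -/

lemma indeg_zero_no_arc (h : T.inDeg v = 0) (a : V) : (a, v) ∉ T.arcs := by
  intro ha
  have : {x ∈ T.arcs | x.2 = v} = ∅ := (Set.ncard_eq_zero (Set.toFinite _)).1 h
  exact absurd (by exact ⟨ha, rfl⟩ : (a,v) ∈ {x ∈ T.arcs | x.2 = v}) (by simp [this])

lemma no_arc_to_root (hT : T.IsOutTree r) (a : V) : (a, r) ∉ T.arcs :=
  indeg_zero_no_arc hT.root_indeg a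

lemma head_unique (hT : T.IsOutTree r) {a b : V} (ha : (a, v) ∈ T.arcs)
    (hb : (b, v) ∈ T.arcs) : a = b := by
  have hv : v ∈ T.verts := (hT.arcs_mem _ ha).2
  have hvr : v ≠ r := fun h => no_arc_to_root hT a (h ▸ ha)
  obtain ⟨x, hx⟩ := Set.ncard_eq_one.1 (hT.indeg_one v hv hvr)
  have h1 : ((a,v) : V × V) ∈ {x ∈ T.arcs | x.2 = v} := ⟨ha, rfl⟩
  have h2 : ((b,v) : V × V) ∈ {x ∈ T.arcs | x.2 = v} := ⟨hb, rfl⟩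
  rw [hx, Set.mem_singleton_iff] at h1 h2
  have := h1.trans h2.symm
  exact congrArg Prod.fst this

/-- There is no dipath from `v` back to a vertex `a` with an arc `(a, v)`. -/
lemma no_cycle (hT : T.IsOutTree r) {q : List V} (hq : T.IsDipath q) {a v : V}
    (hhead : q.head? = some v) (hlast : q.getLast? = some a) (harc : (a, v) ∈ T.arcs) :
    False := by
  -- every vertex of q has an in-arc whose tail is in q
  have key : ∀ y ∈ q, ∃ t ∈ q, (t, y) ∈ T.arcs := by
    intro y hy
    obtain ⟨q', rfl⟩ : ∃ q', q = v :: q' := by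
      cases q with
      | nil => simp at hhead
      | cons h t => exact ⟨t, by simpa using (by simpa using hhead : h = v) ▸ rfl⟩
    rcases List.mem_cons.1 hy with rfl | hy'
    · exact ⟨a, List.mem_of_mem_getLast? hlast, harc⟩
    · obtain ⟨x, hx, hR⟩ := chain'_mem_tail hq.2.2.2 y hy'
      exact ⟨x, hx, hR⟩
  -- hence r ∉ q
  have hrq : r ∉ q := by
    intro hr
    obtain ⟨t, -, ht⟩ := key r hr
    exact no_arc_to_root hT t ht
  -- a dipath from r to v
  have hv : v ∈ T.verts := (hT.arcs_mem _ harc).2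
  obtain ⟨l, hl, hlh, hll⟩ := hT.reach_root v hv
  -- v ∈ q, so l crosses into q
  have hvq : v ∈ q := List.mem_of_mem_head? hhead
  obtain ⟨x, y, hxy, hxS, hyS⟩ := crossing {z | z ∈ q} hl.2.2.2 r hlh hrq v
    (List.mem_of_mem_getLast? hll) hvq
  obtain ⟨t, htq, ht⟩ := key y hyS
  exact hxS (head_unique hT hxy ht ▸ htq)

lemma no_self_arc (hT : T.IsOutTree r) (v : V) : (v, v) ∉ T.arcs := by
  intro h
  exact no_cycle hT (dipath_singleton ((hT.arcs_mem _ h).1)) rfl rfl h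

/-- decomposition of a dipath at its last vertex -/
lemma dipath_snoc {l : List V} (h : D.IsDipath l) {v : V} (hv : l.getLast? = some v) :
    l = [v] ∨ ∃ m a, m ≠ [] ∧ l = m ++ [v] ∧ D.IsDipath m ∧ m.getLast? = some a ∧
      m.head? = l.head? ∧ (a, v) ∈ D.arcs := by
  have hne : l ≠ [] := h.1
  have hv' : l.getLast hne = v := by
    rw [List.getLast?_eq_getLast hne, Option.some_inj] at hv; exact hv
  have hdec : l = l.dropLast ++ [v] := by
    conv_lhs => rw [← List.dropLast_append_getLast hne]
    rw [hv']
  rcases hm : l.dropLast with _ | ⟨c, t⟩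
  · left; rw [hdec, hm]; rfl
  · right
    set m := l.dropLast with hmdef
    have hmne : m ≠ [] := by rw [hm]; simp
    have hpref : m <+: l := ⟨[v], hdec.symm⟩
    have hm_dipath : D.IsDipath m := dipath_prefix h hpref hmne
    obtain ⟨a, ha⟩ : ∃ a, m.getLast? = some a :=
      Option.isSome_iff_exists.1 (List.getLast?_isSome.2 hmne)
    refine ⟨m, a, hmne, hdec, hm_dipath, ha, ?_, ?_⟩
    · rw [hdec, List.head?_append]
      rcases m with _ | ⟨c', t'⟩
      · exact absurd rfl hmne
      · rfl
    · have hch := h.2.2.2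
      rw [hdec] at hch
      simp only [List.Chain'] at *; rw [List.isChain_append] at hch
      exact hch.2.2 a ha v rfl

/-- Uniqueness of dipaths in an out-tree. -/
lemma dipath_unique (hT : T.IsOutTree r) : ∀ (n : ℕ) (l₁ l₂ : List V),
    l₁.length ≤ n → T.IsDipath l₁ → T.IsDipath l₂ →
    l₁.head? = l₂.head? → l₁.getLast? = l₂.getLast? → l₁ = l₂ := by
  intro n
  induction n with
  | zero => intro l₁ l₂ h1 hd1 _ _ _
            exact absurd (List.length_eq_zero_iff.1 (Nat.le_zero.1 h1)) hd1.1
  | succ n ih =>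
    intro l₁ l₂ hlen hd1 hd2 hh hg
    obtain ⟨v, hv1⟩ : ∃ v, l₁.getLast? = some v :=
      Option.isSome_iff_exists.1 (List.getLast?_isSome.2 hd1.1)
    have hv2 : l₂.getLast? = some v := hg ▸ hv1
    obtain ⟨u, hu1⟩ : ∃ u, l₁.head? = some u :=
      Option.isSome_iff_exists.1 ((List.isSome_head? (l := l₁)).2 hd1.1)
    have hu2 : l₂.head? = some u := hh ▸ hu1
    rcases dipath_snoc hd1 hv1 with h1 | ⟨m₁, a₁, hm₁ne, hm₁dec, hm₁p, hm₁l, hm₁h, ha₁⟩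
    · -- l₁ = [v], so u = v; show l₂ = [v]
      have huv : u = v := by rw [h1] at hu1; exact (by simpa using hu1 : v = u).symm
      rcases dipath_snoc hd2 hv2 with h2 | ⟨m₂, a₂, hm₂ne, hm₂dec, hm₂p, hm₂l, hm₂h, ha₂⟩
      · rw [h1, h2]
      · exfalso
        refine no_cycle hT hm₂p ?_ hm₂l ha₂
        rw [hm₂h, hu2, huv]
    · rcases dipath_snoc hd2 hv2 with h2 | ⟨m₂, a₂, hm₂ne, hm₂dec, hm₂p, hm₂l, hm₂h, ha₂⟩
      · exfalso
        have huv : u = v := by rw [h2] at hu2; exact (by simpa using hu2 : v = u).symm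
        refine no_cycle hT hm₁p ?_ hm₁l ha₁
        rw [hm₁h, hu1, huv]
      · have haa : a₁ = a₂ := head_unique hT ha₁ ha₂
        have hmm : m₁ = m₂ := by
          refine ih m₁ m₂ ?_ hm₁p hm₂p (by rw [hm₁h, hm₂h, hh]) (by rw [hm₁l, haa, hm₂l])
          have := congrArg List.length hm₁dec
          simp at this
          omega
        rw [hm₁dec, hm₂dec, hmm]

open Classical in
noncomputable def pathTo (T : DirGraph V) (r v : V) : List V :=
  if h : T.Reaches r v then h.choose else []

lemma pathTo_spec (h : T.Reaches r v) : T.IsDipath (T.pathTo r v) ∧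
    (T.pathTo r v).head? = some r ∧ (T.pathTo r v).getLast? = some v := by
  classical
  rw [pathTo]
  rw [dif_pos h]
  exact h.choose_spec

lemma pathTo_eq (hT : T.IsOutTree r) {l : List V} (hl : T.IsDipath l)
    (hh : l.head? = some r) (hg : l.getLast? = some v) : l = T.pathTo r v := by
  have hr : T.Reaches r v := ⟨l, hl, hh, hg⟩
  obtain ⟨h1, h2, h3⟩ := pathTo_spec hr
  exact dipath_unique hT l.length l (T.pathTo r v) le_rfl hl h1 (by rw [hh, h2])
    (by rw [hg, h3])

lemma pathTo_root (hT : T.IsOutTree r) : T.pathTo r r = [r] :=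
  (pathTo_eq hT (dipath_singleton hT.root_mem) rfl rfl).symm

lemma reaches_root (hT : T.IsOutTree r) (hv : v ∈ T.verts) : T.Reaches r v :=
  hT.reach_root v hv

/-- A vertex on the unique dipath gives reachability both ways. -/
lemma reaches_no_cycle (hT : T.IsOutTree r) {a : V} (hr : T.Reaches v a)
    (h : (a, v) ∈ T.arcs) : False := by
  obtain ⟨q, hq, hqh, hql⟩ := hr
  exact no_cycle hT hq hqh hql h

lemma arc_pathTo (hT : T.IsOutTree r) {a : V} (h : (a, v) ∈ T.arcs) :
    T.pathTo r v = T.pathTo r a ++ [v] := by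
  have ha : a ∈ T.verts := (hT.arcs_mem _ h).1
  have hv : v ∈ T.verts := (hT.arcs_mem _ h).2
  have hra : T.Reaches r a := reaches_root hT ha
  obtain ⟨hp, hph, hpl⟩ := pathTo_spec hra
  have hvnot : v ∉ T.pathTo r a := fun hvm =>
    reaches_no_cycle hT (reaches_getLast_of_mem hp hvm hpl) h
  have hne : T.pathTo r a ≠ [] := hp.1
  have hdip : T.IsDipath (T.pathTo r a ++ [v]) := by
    refine ⟨by simp, ?_, ?_, ?_⟩
    · rw [List.nodup_append]
      exact ⟨hp.2.1, by simp, by intro x hx y hy hxy; rw [List.mem_singleton] at hy; subst hy; subst hxy; exact hvnot hx⟩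
    · intro x hx
      rcases List.mem_append.1 hx with h1 | h1
      · exact hp.2.2.1 x h1
      · simpa using (by simpa using h1 : x = v) ▸ hv
    · simp only [List.Chain'] at *; rw [List.isChain_append]
      refine ⟨hp.2.2.2, by simp, ?_⟩
      intro x hx y hy
      obtain rfl : x = a := by rw [hpl] at hx; simpa using hx.symm
      obtain rfl : y = v := by simpa using hy.symm
      exact h
  refine (pathTo_eq hT hdip ?_ ?_).symm
  · rw [List.head?_append]
    rcases hq : T.pathTo r a with _ | ⟨c, t⟩
    · exact absurd hq hne
    · rw [hq] at hph; simpa using hph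
  · rw [List.getLast?_append_of_ne_nil _ (by simp : [v] ≠ [])]
    simp

lemma prefix_head? {α : Type*} {l l' : List α} (h : l' <+: l) (hne : l' ≠ []) :
    l'.head? = l.head? := by
  obtain ⟨t, rfl⟩ := h
  rcases l' with _ | ⟨a, s⟩
  · exact absurd rfl hne
  · rfl

lemma mem_pathTo_prefix (hT : T.IsOutTree r) {w : V} (hrw : T.Reaches r w)
    (hv : v ∈ T.pathTo r w) : T.pathTo r v <+: T.pathTo r w := by
  obtain ⟨hp, hph, hpl⟩ := pathTo_spec hrw
  obtain ⟨l₁, l₂, hdec⟩ := List.append_of_mem hv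
  have hpre : l₁ ++ [v] <+: T.pathTo r w := ⟨l₂, by rw [hdec]; simp⟩
  have hdip : T.IsDipath (l₁ ++ [v]) := dipath_prefix hp hpre (by simp)
  have heq : l₁ ++ [v] = T.pathTo r v := by
    refine pathTo_eq hT hdip ?_ ?_
    · rw [prefix_head? hpre (by simp), hph]
    · rw [List.getLast?_append_of_ne_nil _ (by simp : [v] ≠ [])]; simp
  rw [← heq]; exact hpre

lemma reaches_iff_mem_pathTo (hT : T.IsOutTree r) (hrv : T.Reaches r v) :
    T.Reaches u v ↔ u ∈ T.pathTo r v := by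
  constructor
  · rintro ⟨l, hl, hlh, hll⟩
    clear hrv
    obtain ⟨n, hn⟩ : ∃ n, l.length ≤ n := ⟨l.length, le_rfl⟩
    induction n generalizing l u v with
    | zero => exact absurd (List.length_eq_zero_iff.1 (Nat.le_zero.1 hn)) hl.1
    | succ n ih =>
      rcases dipath_snoc hl hll with h1 | ⟨m, a, hmne, hmdec, hmp, hml, hmh, ha⟩
      · obtain rfl : u = v := by rw [h1] at hlh; exact (by simpa using hlh : v = u).symm
        exact List.mem_of_mem_getLast? (pathTo_spec
          (reaches_root hT (hl.2.2.1 u (by rw [h1]; simp)))).2.2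
      · have hu_mem : u ∈ T.pathTo r a := by
          refine ih (u := u) (v := a) m hmp (by rw [hmh, hlh]) hml ?_
          have := congrArg List.length hmdec
          simp at this; omega
        rw [arc_pathTo hT ha]
        exact List.mem_append.2 (Or.inl hu_mem)
  · intro h
    obtain ⟨hp, hph, hpl⟩ := pathTo_spec hrv
    exact reaches_getLast_of_mem hp h hpl

lemma reaches_trans (hT : T.IsOutTree r) {w : V} (h1 : T.Reaches u v)
    (h2 : T.Reaches v w) : T.Reaches u w := by
  have hrv : T.Reaches r v := reaches_root hT (reaches_right_mem h1)
  have hrw : T.Reaches r w := reaches_root hT (reaches_right_mem h2)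
  rw [reaches_iff_mem_pathTo hT hrv] at h1
  rw [reaches_iff_mem_pathTo hT hrw] at h2 ⊢
  exact (mem_pathTo_prefix hT hrw h2).sublist.mem h1

lemma exists_parent (hT : T.IsOutTree r) (hv : v ∈ T.verts) (hvr : v ≠ r) :
    ∃ a, (a, v) ∈ T.arcs ∧ T.pathTo r v = T.pathTo r a ++ [v] := by
  obtain ⟨hp, hph, hpl⟩ := pathTo_spec (reaches_root hT hv)
  rcases dipath_snoc hp hpl with h1 | ⟨m, a, hmne, hmdec, hmp, hml, hmh, ha⟩
  · rw [h1] at hph; exact absurd (by simpa using hph : v = r) hvr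
  · have hm : m = T.pathTo r a := pathTo_eq hT hmp (by rw [hmh, hph]) hml
    exact ⟨a, ha, by rw [hmdec, hm]⟩

lemma descend_induction (hT : T.IsOutTree r) (P : V → Prop) (hr : P r)
    (step : ∀ a b, (a, b) ∈ T.arcs → P a → P b) : ∀ v ∈ T.verts, P v := by
  have key : ∀ n v, v ∈ T.verts → (T.pathTo r v).length ≤ n → P v := by
    intro n
    induction n with
    | zero =>
      intro v hv hlen
      exact absurd (List.length_eq_zero_iff.1 (Nat.le_zero.1 hlen))
        (pathTo_spec (reaches_root hT hv)).1.1
    | succ n ih =>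
      intro v hv hlen
      by_cases hvr : v = r
      · exact hvr ▸ hr
      · obtain ⟨a, ha, hdec⟩ := exists_parent hT hv hvr
        have hlen' : (T.pathTo r a).length ≤ n := by
          have := congrArg List.length hdec
          simp at this; omega
        exact step a v ha (ih a (hT.arcs_mem _ ha).1 hlen')
  exact fun v hv => key (T.pathTo r v).length v hv le_rfl

lemma no_two_cycle (hT : T.IsOutTree r) {a b : V} (h1 : (a, b) ∈ T.arcs)
    (h2 : (b, a) ∈ T.arcs) : False := by
  have e1 := arc_pathTo hT (r := r) h1
  have e2 := arc_pathTo hT (r := r) h2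
  have l1 := congrArg List.length e1
  have l2 := congrArg List.length e2
  simp at l1 l2
  omega

/- ### the underlying graph is a tree -/

lemma underlying_adj {x y : {v // v ∈ T.verts}} :
    (underlying T).Adj x y ↔ x ≠ y ∧ ((x.1, y.1) ∈ T.arcs ∨ (y.1, x.1) ∈ T.arcs) := by
  rw [underlying, SimpleGraph.fromRel_adj]

lemma adj_of_arc (hT : T.IsOutTree r) {a b : V} (h : (a, b) ∈ T.arcs)
    (ha : a ∈ T.verts) (hb : b ∈ T.verts) :
    (underlying T).Adj ⟨a, ha⟩ ⟨b, hb⟩ := by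
  rw [underlying_adj]
  refine ⟨?_, Or.inl h⟩
  intro hab
  obtain rfl : a = b := congrArg Subtype.val hab
  exact no_self_arc hT a h

lemma underlying_reachable (hT : T.IsOutTree r) (x : {v // v ∈ T.verts}) :
    (underlying T).Reachable ⟨r, hT.root_mem⟩ x := by
  obtain ⟨v, hv⟩ := x
  refine descend_induction hT
    (fun v => ∀ hv : v ∈ T.verts, (underlying T).Reachable ⟨r, hT.root_mem⟩ ⟨v, hv⟩)
    (fun _ => SimpleGraph.Reachable.refl _) ?_ v hv hv
  intro a b hab ha hb
  have hav : a ∈ T.verts := (hT.arcs_mem _ hab).1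
  exact (ha hav).trans (adj_of_arc hT hab hav hb).reachable

lemma underlying_connected (hT : T.IsOutTree r) : (underlying T).Connected := by
  have : Nonempty {v // v ∈ T.verts} := ⟨⟨r, hT.root_mem⟩⟩
  exact ⟨fun x y => (underlying_reachable hT x).symm.trans (underlying_reachable hT y)⟩

lemma underlying_acyclic (hT : T.IsOutTree r) : (underlying T).IsAcyclic := by
  classical
  intro v c hc
  have hvs : v ∈ c.support := c.start_mem_support
  obtain ⟨m, hm_mem', hm_max'⟩ := Finset.exists_max_image c.support.toFinset
    (fun x => (T.pathTo r x.1).length) ⟨v, List.mem_toFinset.2 hvs⟩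
  have hm_mem : m ∈ c.support := List.mem_toFinset.1 hm_mem'
  have hm_max : ∀ x ∈ c.support, (T.pathTo r x.1).length ≤ (T.pathTo r m.1).length :=
    fun x hx => hm_max' x (List.mem_toFinset.2 hx)
  obtain ⟨c', hc', hsup⟩ : ∃ c' : (underlying T).Walk m m, c'.IsCycle ∧
      ∀ x ∈ c'.support, x ∈ c.support := by
    refine ⟨c.rotate m hm_mem, hc.rotate hm_mem, ?_⟩
    intro x hx
    rw [SimpleGraph.Walk.support_eq_cons (c.rotate m hm_mem)] at hx
    rcases List.mem_cons.1 hx with rfl | hx'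
    · exact hm_mem
    · have := (SimpleGraph.Walk.support_rotate c m hm_mem).mem_iff.1 hx'
      exact List.tail_sublist _ |>.mem this
  -- every cycle neighbor of m must be its unique in-neighbor
  have key : ∀ x : {v // v ∈ T.verts}, (underlying T).Adj m x → x ∈ c.support →
      (x.1, m.1) ∈ T.arcs := by
    intro x hadj hxc
    rcases (underlying_adj.1 hadj).2 with h1 | h1
    · exfalso
      have := hm_max x hxc
      have hlen := congrArg List.length (arc_pathTo hT (r := r) h1)
      simp at hlen
      omega
    · exact h1
  clear hm_max hm_mem hc hvs
  -- decompose the rotated cycle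
  cases c' with
  | nil => exact hc'.ne_nil rfl
  | @cons _ u _ hadj q =>
    have hu : (u.1, m.1) ∈ T.arcs := by
      refine key u hadj ?_
      exact hsup u (by simp [SimpleGraph.Walk.support_cons])
    cases hrev : (SimpleGraph.Walk.cons hadj q).reverse with
    | nil =>
      have := congrArg SimpleGraph.Walk.length hrev
      simp at this
    | @cons _ w _ hadj' q' =>
      have hw : (w.1, m.1) ∈ T.arcs := by
        refine key w ?_ ?_
        · exact hadj'
        · refine hsup w ?_
          have hwmem : w ∈ (SimpleGraph.Walk.cons hadj q).reverse.support := by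
            rw [hrev]
            simp [SimpleGraph.Walk.support_cons]
          rwa [SimpleGraph.Walk.support_reverse, List.mem_reverse] at hwmem
      have huw : u = w := Subtype.ext (head_unique hT hu hw)
      -- but then the first and last edges of the cycle coincide
      have hnodup : (SimpleGraph.Walk.cons hadj q).edges.Nodup :=
        hc'.isCircuit.isTrail.edges_nodup
      have h3 : 3 ≤ (SimpleGraph.Walk.cons hadj q).length := hc'.three_le_length
      have hlen2 : 2 ≤ (SimpleGraph.Walk.cons hadj q).edges.length := by
        rw [SimpleGraph.Walk.length_edges]
        omega
      have h1 : (SimpleGraph.Walk.cons hadj q).edges = s(m, u) :: q.edges := by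
        simp [SimpleGraph.Walk.edges_cons]
      have h2 : (SimpleGraph.Walk.cons hadj q).edges.reverse = s(m, w) :: q'.edges := by
        rw [← SimpleGraph.Walk.edges_reverse, hrev]
        simp [SimpleGraph.Walk.edges_cons]
      exact nodup_head_ne_of_rev hnodup hlen2 h1 h2 (by rw [huw])


/- ### bags and their connectivity -/

lemma mem_bag_iff {D : DirGraph V} {x v : V} :
    x ∈ bag D T v ↔ (x, v) ∈ T.arcs ∨ x = v ∨ x ∈ brSucc T ∨ x ∈ leaves T ∨
      x ∈ heads (backArcs D T v) := by
  simp only [bag, Set.mem_union, Set.mem_setOf_eq, Set.mem_singleton_iff, or_assoc]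

lemma self_mem_bag {D : DirGraph V} (v : V) : v ∈ bag D T v :=
  mem_bag_iff.2 (Or.inr (Or.inl rfl))

lemma bag_vert {D : DirGraph V} (hT : T.IsOutTree r) {x v : V} (hv : v ∈ T.verts)
    (h : x ∈ bag D T v) : x ∈ T.verts := by
  rcases mem_bag_iff.1 h with h | h | h | h | h
  · exact (hT.arcs_mem _ h).1
  · exact h ▸ hv
  · obtain ⟨u, hu, -⟩ := h
    exact (hT.arcs_mem _ hu).2
  · exact h.1
  · obtain ⟨a, ha, rfl⟩ := h
    exact reaches_left_mem ha.2.1.1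

/-- Connectivity step relation for bags. -/
def bagRel (D T : DirGraph V) (x : V) (a b : {v // v ∈ T.verts}) : Prop :=
  (underlying T).Adj a b ∧ x ∈ bag D T a.1 ∧ x ∈ bag D T b.1

lemma bagRel_symm {D : DirGraph V} {x : V} : Symmetric (bagRel D T x) :=
  fun _ _ h => ⟨h.1.symm, h.2.2, h.2.1⟩

lemma rtg_all {D : DirGraph V} (hT : T.IsOutTree r) {x : V}
    (hall : ∀ j : V, x ∈ bag D T j) (i : {v // v ∈ T.verts}) :
    Relation.ReflTransGen (bagRel D T x) ⟨r, hT.root_mem⟩ i := by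
  obtain ⟨v, hv⟩ := i
  refine descend_induction hT
    (fun v => ∀ hv : v ∈ T.verts,
      Relation.ReflTransGen (bagRel D T x) ⟨r, hT.root_mem⟩ ⟨v, hv⟩)
    (fun _ => Relation.ReflTransGen.refl) ?_ v hv hv
  intro a b hab ha hb
  have hav : a ∈ T.verts := (hT.arcs_mem _ hab).1
  exact (ha hav).tail ⟨adj_of_arc hT hab hav hb, hall a, hall b⟩

lemma bag_connect {D : DirGraph V} (hT : T.IsOutTree r) {x : V} (hx : x ∈ T.verts)
    (i : {v // v ∈ T.verts}) (hbag : x ∈ bag D T i.1) :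
    Relation.ReflTransGen (bagRel D T x) ⟨x, hx⟩ i := by
  have hall_of : (x ∈ brSucc T ∨ x ∈ leaves T) → ∀ j : V, x ∈ bag D T j := by
    rintro (h | h) j
    · exact mem_bag_iff.2 (Or.inr (Or.inr (Or.inl h)))
    · exact mem_bag_iff.2 (Or.inr (Or.inr (Or.inr (Or.inl h))))
  rcases mem_bag_iff.1 hbag with h | h | h | h | h
  · -- x is the in-neighbor of i
    exact Relation.ReflTransGen.single
      ⟨adj_of_arc hT h hx i.2, self_mem_bag x, hbag⟩
  · -- x = i
    have : i = ⟨x, hx⟩ := Subtype.ext h.symm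
    rw [this]
  · exact ((@Relation.ReflTransGen.stdSymm _ (bagRel D T x) ⟨fun _ _ h => bagRel_symm h⟩).symm _ _
      (rtg_all hT (hall_of (Or.inl h)) ⟨x, hx⟩)).trans (rtg_all hT (hall_of (Or.inl h)) i)
  · exact ((@Relation.ReflTransGen.stdSymm _ (bagRel D T x) ⟨fun _ _ h => bagRel_symm h⟩).symm _ _
      (rtg_all hT (hall_of (Or.inr h)) ⟨x, hx⟩)).trans (rtg_all hT (hall_of (Or.inr h)) i)
  · -- x is the head of a back arc over i: walk down from i to x
    have key : ∀ n (i : {v // v ∈ T.verts}), (T.pathTo r i.1).length ≤ n →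
        x ∈ heads (backArcs D T i.1) →
        Relation.ReflTransGen (bagRel D T x) ⟨x, hx⟩ i := by
      intro n
      induction n with
      | zero =>
        intro i hlen _
        exact absurd (List.length_eq_zero_iff.1 (Nat.le_zero.1 hlen))
          (pathTo_spec (reaches_root hT i.2)).1.1
      | succ n ih =>
        intro i hlen hmem
        have hbag_i : x ∈ bag D T i.1 :=
          mem_bag_iff.2 (Or.inr (Or.inr (Or.inr (Or.inr hmem))))
        obtain ⟨a, ha, hax⟩ := hmem
        obtain ⟨a1, a2⟩ := a
        dsimp at hax
        have hax' := hax.symm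
        subst hax'
        have haD : (a1, x) ∈ D.arcs := ha.1
        have hxi : T.Reaches x i.1 := ha.2.1.1
        have hxne : x ≠ i.1 := ha.2.1.2
        have hip : T.Reaches i.1 a1 := ha.2.2
        have hri : T.Reaches r i.1 := reaches_root hT i.2
        have hxmem : x ∈ T.pathTo r i.1 := (reaches_iff_mem_pathTo hT hri).1 hxi
        have hir : i.1 ≠ r := by
          intro hir
          rw [hir, pathTo_root hT] at hxmem
          exact hxne ((by simpa using hxmem : x = r).trans hir.symm)
        obtain ⟨w, hw, hdec⟩ := exists_parent hT i.2 hir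
        have hwv : w ∈ T.verts := (hT.arcs_mem _ hw).1
        have hxw : x ∈ T.pathTo r w := by
          rw [hdec] at hxmem
          rcases List.mem_append.1 hxmem with h1 | h1
          · exact h1
          · exact absurd (by simpa using h1) hxne
        by_cases hwx : w = x
        · subst hwx
          exact Relation.ReflTransGen.single ⟨adj_of_arc hT hw hwv i.2, self_mem_bag w, hbag_i⟩
        · have hxw_mem : x ∈ heads (backArcs D T w) := by
            refine ⟨(a1, x), ⟨haD, ⟨?_, ?_⟩, ?_⟩, rfl⟩
            · exact (reaches_iff_mem_pathTo hT (reaches_root hT hwv)).2 hxw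
            · exact fun h => hwx h.symm
            · refine reaches_trans hT ?_ hip
              refine (reaches_iff_mem_pathTo hT hri).2 ?_
              rw [hdec]
              exact List.mem_append.2 (Or.inl (List.mem_of_mem_getLast?
                (pathTo_spec (reaches_root hT hwv)).2.2))
          have hlenw : (T.pathTo r w).length ≤ n := by
            have := congrArg List.length hdec
            simp at this; omega
          have hbag_w : x ∈ bag D T w :=
            mem_bag_iff.2 (Or.inr (Or.inr (Or.inr (Or.inr hxw_mem))))
          exact (ih ⟨w, hwv⟩ hlenw hxw_mem).tail
            ⟨adj_of_arc hT hw hwv i.2, hbag_w, hbag_i⟩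
    exact key (T.pathTo r i.1).length i le_rfl h

/- ### the 1-change operation -/

lemma chain'_lift {α : Type*} {R S : α → α → Prop} :
    ∀ {l : List α}, l.Chain' R → (∀ a b, b ∈ l.tail → R a b → S a b) → l.Chain' S := by
  intro l
  induction l with
  | nil => intro _ _; exact List.isChain_nil
  | cons a t ih =>
    intro h hmem
    cases t with
    | nil => exact List.isChain_singleton _
    | cons b t' =>
      simp only [List.Chain'] at h ⊢; rw [List.isChain_cons_cons] at h ⊢
      refine ⟨hmem a b (by simp) h.1, ih h.2 ?_⟩
      intro a' b' hb' hR
      exact hmem a' b' (List.mem_cons_of_mem _ hb') hR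

lemma mem_oneChange_arcs {a : V × V} {u v : V} :
    a ∈ (oneChange T u v).arcs ↔ (a ∈ T.arcs ∧ a.2 ≠ v) ∨ a = (u, v) := by
  simp [oneChange, Set.mem_union, Set.mem_setOf_eq, or_comm]

lemma oneChange_isOutBranching {D : DirGraph V} {u v : V} (hD : D.WellFormed)
    (hTB : IsOutBranching T D r) (huv : (u, v) ∈ D.arcs) (hnT : (u, v) ∉ T.arcs)
    (hnr : ¬ T.Reaches v u) : IsOutBranching (oneChange T u v) D r ∧ v ≠ r := by
  obtain ⟨⟨hT, hsub⟩, hVeq⟩ := hTB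
  have hu : u ∈ T.verts := by rw [hVeq]; exact (hD _ huv).1
  have hv : v ∈ T.verts := by rw [hVeq]; exact (hD _ huv).2.1
  have hvr : v ≠ r := by
    rintro rfl
    exact hnr (reaches_root hT hu)
  have harcs : ∀ a ∈ (oneChange T u v).arcs, a.1 ∈ T.verts ∧ a.2 ∈ T.verts := by
    intro a ha
    rcases mem_oneChange_arcs.1 ha with ⟨h1, -⟩ | rfl
    · exact hT.arcs_mem _ h1
    · exact ⟨hu, hv⟩
  -- the key part : every vertex is reachable from r in the new digraph
  have hreach : ∀ z ∈ T.verts, (oneChange T u v).Reaches r z := by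
    intro z hz
    obtain ⟨hp, hph, hpl⟩ := pathTo_spec (reaches_root hT hz)
    by_cases hvz : v ∈ T.pathTo r z
    · -- splice : pathTo r u followed by the part of pathTo r z from v
      obtain ⟨hq, hqh, hql⟩ := pathTo_spec (reaches_root hT hu)
      have hvq : v ∉ T.pathTo r u := fun hm =>
        hnr (reaches_getLast_of_mem hq hm hql)
      obtain ⟨l₁, l₂, hdec⟩ := List.append_of_mem hvz
      have hsuf : (v :: l₂) <:+ T.pathTo r z := ⟨l₁, hdec.symm⟩
      have hs : T.IsDipath (v :: l₂) := dipath_suffix hp hsuf (by simp)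
      have hdisj : (T.pathTo r u).Disjoint (v :: l₂) := by
        intro y hy hy'
        have h1 : T.Reaches y u := reaches_getLast_of_mem hq hy hql
        have h2 : T.Reaches v y := reaches_of_head_mem hs rfl hy'
        exact hnr (reaches_trans hT h2 h1)
      refine ⟨T.pathTo r u ++ (v :: l₂), ⟨by simp [hq.1], ?_, ?_, ?_⟩, ?_, ?_⟩
      · exact List.nodup_append.2 ⟨hq.2.1, hs.2.1, fun a ha b hb hab => hdisj ha (by rw [hab]; exact hb)⟩
      · intro x hx
        rcases List.mem_append.1 hx with h1 | h1
        · exact hq.2.2.1 x h1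
        · exact hs.2.2.1 x h1
      · simp only [List.Chain'] at *; rw [List.isChain_append]
        refine ⟨?_, ?_, ?_⟩
        · refine chain'_lift hq.2.2.2 ?_
          intro a b hb hab
          exact mem_oneChange_arcs.2 (Or.inl ⟨hab, fun hbv =>
            hvq (List.tail_sublist _ |>.mem (hbv ▸ hb))⟩)
        · refine chain'_lift hs.2.2.2 ?_
          intro a b hb hab
          refine mem_oneChange_arcs.2 (Or.inl ⟨hab, fun hbv => ?_⟩)
          have := hs.2.1
          rw [List.nodup_cons] at this
          exact this.1 (hbv ▸ hb)
        · intro x hx y hy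
          obtain rfl : x = u := by rw [hql] at hx; simpa using hx.symm
          obtain rfl : y = v := by simpa using hy.symm
          exact mem_oneChange_arcs.2 (Or.inr rfl)
      · rw [List.head?_append]
        rcases hqq : T.pathTo r u with _ | ⟨c, t⟩
        · exact absurd hqq hq.1
        · rw [hqq] at hqh; simpa using hqh
      · rw [List.getLast?_append_of_ne_nil _ (by simp : (v :: l₂) ≠ [])]
        rw [hdec] at hpl
        rwa [List.getLast?_append_of_ne_nil _ (by simp : (v :: l₂) ≠ [])] at hpl
    · -- the old dipath avoids v entirely
      refine ⟨T.pathTo r z, ⟨hp.1, hp.2.1, hp.2.2.1, ?_⟩, hph, hpl⟩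
      refine chain'_lift hp.2.2.2 ?_
      intro a b hb hab
      exact mem_oneChange_arcs.2 (Or.inl ⟨hab, fun hbv =>
        hvz (List.tail_sublist _ |>.mem (hbv ▸ hb))⟩)
  refine ⟨⟨⟨⟨harcs, hT.root_mem, ?_, ?_, hreach⟩, ?_⟩, hVeq⟩, hvr⟩
  · -- in-degree of the root is 0
    have : {a ∈ (oneChange T u v).arcs | a.2 = r} = ∅ := by
      ext ⟨x, y⟩
      simp only [Set.mem_setOf_eq, Set.mem_empty_iff_false, iff_false, not_and]
      intro ha hy
      subst hy
      rcases mem_oneChange_arcs.1 ha with ⟨h1, -⟩ | hE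
      · exact no_arc_to_root hT x h1
      · exact hvr (congrArg Prod.snd hE).symm
    rw [inDeg, this, Set.ncard_empty]
  · -- in-degree of every other vertex is 1
    intro z hz hzr
    by_cases hzv : z = v
    · subst hzv
      have : {a ∈ (oneChange T u z).arcs | a.2 = z} = {(u, z)} := by
        ext ⟨x, y⟩
        simp only [Set.mem_setOf_eq, Set.mem_singleton_iff, Prod.mk.injEq]
        constructor
        · rintro ⟨ha, rfl⟩
          rcases mem_oneChange_arcs.1 ha with ⟨-, hne⟩ | hE
          · exact absurd rfl hne
          · exact ⟨(Prod.ext_iff.1 hE).1, rfl⟩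
        · rintro ⟨rfl, rfl⟩
          exact ⟨mem_oneChange_arcs.2 (Or.inr rfl), rfl⟩
      rw [inDeg, this, Set.ncard_singleton]
    · have : {a ∈ (oneChange T u v).arcs | a.2 = z} = {a ∈ T.arcs | a.2 = z} := by
        ext ⟨x, y⟩
        simp only [Set.mem_setOf_eq]
        constructor
        · rintro ⟨ha, rfl⟩
          rcases mem_oneChange_arcs.1 ha with ⟨h1, -⟩ | hE
          · exact ⟨h1, rfl⟩
          · exact absurd (congrArg Prod.snd hE) hzv
        · rintro ⟨ha, rfl⟩
          exact ⟨mem_oneChange_arcs.2 (Or.inl ⟨ha, hzv⟩), rfl⟩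
      rw [inDeg, this]
      exact hT.indeg_one z hz hzr
  · -- subgraph of D
    constructor
    · exact hsub.1
    · intro a ha
      rcases mem_oneChange_arcs.1 ha with ⟨h1, -⟩ | rfl
      · exact hsub.2 h1
      · exact huv

lemma oneChange_leaves {D : DirGraph V} {u v w : V} (hD : D.WellFormed)
    (hTB : IsOutBranching T D r) (huv : (u, v) ∈ D.arcs) (hnT : (u, v) ∉ T.arcs)
    (hwv : (w, v) ∈ T.arcs) (houtw : T.outDeg w = 1) (hu_out : T.outDeg u ≠ 0) :
    leaves (oneChange T u v) = insert w (leaves T) := by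
  obtain ⟨⟨hT, hsub⟩, hVeq⟩ := hTB
  have hu : u ∈ T.verts := by rw [hVeq]; exact (hD _ huv).1
  have hw : w ∈ T.verts := (hT.arcs_mem _ hwv).1
  have huw : u ≠ w := fun h => hnT (h ▸ hwv)
  ext z
  simp only [leaves, Set.mem_setOf_eq, Set.mem_insert_iff]
  constructor
  · rintro ⟨hz, hz0⟩
    by_cases hzw : z = w
    · exact Or.inl hzw
    · right
      refine ⟨hz, ?_⟩
      by_cases hzu : z = u
      · -- impossible : u has an out-arc in the new tree
        exfalso
        have : (u, v) ∈ {a ∈ (oneChange T u v).arcs | a.1 = z} :=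
          ⟨mem_oneChange_arcs.2 (Or.inr rfl), hzu.symm⟩
        rw [outDeg, Set.ncard_eq_zero (Set.toFinite _)] at hz0
        rw [hz0] at this
        exact this
      · -- out-arcs of z are unchanged
        have hset : {a ∈ T.arcs | a.1 = z} = {a ∈ (oneChange T u v).arcs | a.1 = z} := by
          ext a
          simp only [Set.mem_setOf_eq]
          constructor
          · rintro ⟨ha, h1⟩
            refine ⟨mem_oneChange_arcs.2 (Or.inl ⟨ha, fun h2 => ?_⟩), h1⟩
            have : a = (w, v) := by
              have := head_unique hT (a := a.1) (b := w) (v := v) (by rw [← h2]; exact ha) hwv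
              rw [← this, ← h2]
            exact hzw (by rw [← h1, this])
          · rintro ⟨ha, h1⟩
            rcases mem_oneChange_arcs.1 ha with ⟨h2, -⟩ | hE
            · exact ⟨h2, h1⟩
            · exact absurd ((Prod.ext_iff.1 hE).1.symm.trans h1).symm hzu
        rw [outDeg, hset]
        exact hz0
  · rintro (rfl | ⟨hz, hz0⟩)
    · -- w is a leaf of the new tree
      refine ⟨hw, ?_⟩
      have : {a ∈ (oneChange T u v).arcs | a.1 = z} = ∅ := by
        ext a
        simp only [Set.mem_setOf_eq, Set.mem_empty_iff_false, iff_false, not_and]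
        intro ha h1
        rcases mem_oneChange_arcs.1 ha with ⟨h2, hne⟩ | hE
        · -- a would be a second out-arc of w in T
          have hpair : {((z : V), v), a} ⊆ {a ∈ T.arcs | a.1 = z} := by
            rintro b (rfl | hb)
            · exact ⟨hwv, rfl⟩
            · rw [Set.mem_singleton_iff] at hb
              exact hb ▸ ⟨h2, h1⟩
          have hne2 : ((z : V), v) ≠ a := by
            intro h
            exact hne (by rw [← h])
          have h2le : 2 ≤ T.outDeg z := by
            rw [outDeg]
            calc 2 = ({((z : V), v), a} : Set (V × V)).ncard := (Set.ncard_pair hne2).symm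
              _ ≤ {a ∈ T.arcs | a.1 = z}.ncard := Set.ncard_le_ncard hpair (Set.toFinite _)
          omega
        · exact huw ((Prod.ext_iff.1 hE).1.symm.trans h1)
      rw [outDeg, this, Set.ncard_empty]
    · -- other leaves of T stay leaves
      refine ⟨hz, ?_⟩
      have hzu : z ≠ u := by
        rintro rfl
        exact hu_out hz0
      have hset : {a ∈ (oneChange T u v).arcs | a.1 = z} ⊆ {a ∈ T.arcs | a.1 = z} := by
        rintro a ⟨ha, h1⟩
        rcases mem_oneChange_arcs.1 ha with ⟨h2, -⟩ | hE
        · exact ⟨h2, h1⟩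
        · exact absurd ((Prod.ext_iff.1 hE).1.symm.trans h1).symm hzu
      have : {a ∈ (oneChange T u v).arcs | a.1 = z} = ∅ := by
        rw [outDeg, Set.ncard_eq_zero (Set.toFinite _)] at hz0
        exact Set.subset_empty_iff.1 (hz0 ▸ hset)
      rw [outDeg, this, Set.ncard_empty]

end Infra

theorem bags_form_treeDecomp {V : Type} [Fintype V]
    (D T : DirGraph V) (r : V) (hD : D.WellFormed)
    (hT : IsOneOptimal T D r) :
    IsTreeDecomp D (underlying T) (fun i => bag D T i.1) := by
  obtain ⟨hTB, hopt⟩ := hT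
  have hOT : T.IsOutTree r := hTB.1.1
  have hVeq : T.verts = D.verts := hTB.2
  refine ⟨⟨underlying_connected hOT, underlying_acyclic hOT⟩, ?_, ?_, ?_⟩
  · -- every vertex is in a bag
    intro v hv
    exact ⟨⟨v, hVeq ▸ hv⟩, self_mem_bag v⟩
  · -- every arc has both ends in a common bag
    rintro ⟨x, y⟩ ha
    have hx : x ∈ T.verts := hVeq ▸ (hD _ ha).1
    have hy : y ∈ T.verts := hVeq ▸ (hD _ ha).2.1
    have hxy : x ≠ y := (hD _ ha).2.2
    by_cases hTa : (x, y) ∈ T.arcs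
    · -- a tree arc : use the bag at y
      exact ⟨⟨y, hy⟩, mem_bag_iff.2 (Or.inl hTa), self_mem_bag y⟩
    · by_cases hback : T.Reaches y x
      · -- a back arc : use the bag at x
        refine ⟨⟨x, hx⟩, self_mem_bag x, ?_⟩
        refine mem_bag_iff.2 (Or.inr (Or.inr (Or.inr (Or.inr ?_))))
        exact ⟨(x, y), ⟨ha, ⟨hback, fun h => hxy h.symm⟩, reaches_refl hx⟩, rfl⟩
      · -- a forward/cross arc : use 1-optimality
        have hyr : y ≠ r := by
          rintro rfl
          exact hback (reaches_root hOT hx)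
        obtain ⟨w, hwv, -⟩ := exists_parent hOT hy hyr
        by_cases hbr : 2 ≤ T.outDeg w
        · -- y ∈ BrSucc(T) : use the bag at x
          refine ⟨⟨x, hx⟩, self_mem_bag x, ?_⟩
          exact mem_bag_iff.2 (Or.inr (Or.inr (Or.inl ⟨w, hwv, hbr⟩)))
        · by_cases hxl : T.outDeg x = 0
          · -- x ∈ Leaf(T) : use the bag at y
            exact ⟨⟨y, hy⟩, mem_bag_iff.2 (Or.inr (Or.inr (Or.inr (Or.inl ⟨hx, hxl⟩)))),
              self_mem_bag y⟩
          · -- otherwise the 1-change for (x, y) would gain a leaf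
            exfalso
            have houtw : T.outDeg w = 1 := by
              have h1 : 0 < T.outDeg w := by
                rw [outDeg, Set.ncard_pos (Set.toFinite _)]
                exact ⟨(w, y), hwv, rfl⟩
              omega
            obtain ⟨hOB, hyr'⟩ := oneChange_isOutBranching hD hTB ha hTa hback
            have hle := hopt x y ha hTa hyr' r hOB
            have hleq := oneChange_leaves hD hTB ha hTa hwv houtw hxl
            have hwnl : w ∉ leaves T := by
              rintro ⟨-, h0⟩
              rw [houtw] at h0
              exact one_ne_zero h0
            rw [hleq, Set.ncard_insert_of_notMem hwnl (Set.toFinite _)] at hle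
            omega
  · -- the bags containing a fixed vertex are connected
    intro x i j hxi hxj
    have hx : x ∈ T.verts := bag_vert hOT i.2 hxi
    have h1 := bag_connect hOT hx i hxi
    have h2 := bag_connect hOT hx j hxj
    exact ((@Relation.ReflTransGen.stdSymm _ (bagRel D T x) ⟨fun _ _ h => bagRel_symm h⟩).symm _ _ h1).trans h2

end DirGraph
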